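/- Let a < b be reals, let U_n be an (n+1)-dimensional subspace of C^n([a,b],ℝ) possessing a non-negative Bernstein basis p_{n,0},…,p_{n,n}, let f_0 ∈ U_n be strictly positive on [a,b], and suppose D_{f_0}U_n := { (f/f_0)′ : f ∈ U_n } possesses a positive Bernstein basis q_{n-1,0},…,q_{n-1,n-1} (each q_{n-1,k} > 0 on (a,b)). Let f_1 ∈ U_n be such that f_1/f_0 is strictly increasing on [a,b]. If there exist strictly increasing nodes t_{n,0} < t_{n,1} < ⋯ < t_{n,n} in [a,b] and strictly positive weights α_{n,0},…,α_{n,n} such that the operator B_n f = Σ_{k=0}^n f(t_{n,k}) α_{n,k} p_{n,k} fixes f_0 and f_1, then (f_1/f_0)′(x) > 0 for all x ∈ [a,b]. -/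

import Mathlib

open Set Filter Topology

noncomputable section

lemma myItDW_eq {s : Set ℝ} (hs : IsOpen s) {x : ℝ} (hx : x ∈ s) (j : ℕ) (f : ℝ → ℝ) :
    iteratedDerivWithin j f s x = iteratedDeriv j f x := by
  rw [iteratedDerivWithin_eq_iteratedFDerivWithin, iteratedDeriv_eq_iteratedFDeriv,
    iteratedFDerivWithin_of_isOpen j hs hx]

lemma myItD_zero (j : ℕ) (x : ℝ) : iteratedDeriv j (fun _ : ℝ => (0:ℝ)) x = 0 := by
  induction j generalizing x with
  | zero => simp
  | succ j IH =>
    rw [iteratedDeriv_succ']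
    have : deriv (fun _ : ℝ => (0:ℝ)) = fun _ : ℝ => (0:ℝ) := deriv_const' (0:ℝ)
    rw [this]; exact IH x

lemma myItD_add {s : Set ℝ} (hs : IsOpen s) {x : ℝ} (hx : x ∈ s) {j : ℕ} {f g : ℝ → ℝ}
    (hf : ContDiffOn ℝ j f s) (hg : ContDiffOn ℝ j g s) :
    iteratedDeriv j (fun y => f y + g y) x = iteratedDeriv j f x + iteratedDeriv j g x := by
  have h : (fun y => f y + g y) = f + g := rfl
  rw [h, ← myItDW_eq hs hx, ← myItDW_eq hs hx j f, ← myItDW_eq hs hx j g]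
  exact iteratedDerivWithin_add hx hs.uniqueDiffOn (hf.contDiffWithinAt hx) (hg.contDiffWithinAt hx)

lemma myItD_const_mul {s : Set ℝ} (hs : IsOpen s) {x : ℝ} (hx : x ∈ s) {j : ℕ} (c : ℝ) {f : ℝ → ℝ}
    (hf : ContDiffOn ℝ j f s) :
    iteratedDeriv j (fun y => c * f y) x = c * iteratedDeriv j f x := by
  rw [← myItDW_eq hs hx, ← myItDW_eq hs hx j f]
  exact iteratedDerivWithin_const_mul hx hs.uniqueDiffOn c (hf.contDiffWithinAt hx)

lemma myItD_sum {s : Set ℝ} (hs : IsOpen s) {x : ℝ} (hx : x ∈ s) (j : ℕ)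
    {ι : Type*} (u : Finset ι) (v : ι → ℝ → ℝ) (hv : ∀ m ∈ u, ContDiffOn ℝ j (v m) s) :
    iteratedDeriv j (fun y => ∑ m ∈ u, v m y) x = ∑ m ∈ u, iteratedDeriv j (v m) x := by
  classical
  induction u using Finset.induction_on with
  | empty => simpa using myItD_zero j x
  | @insert a u hni IH =>
    have h1 : ContDiffOn ℝ j (v a) s := hv a (Finset.mem_insert_self a u)
    have h2 : ∀ m ∈ u, ContDiffOn ℝ j (v m) s := fun m hm => hv m (Finset.mem_insert_of_mem hm)
    have h3 : ContDiffOn ℝ j (fun y => ∑ m ∈ u, v m y) s := ContDiffOn.sum h2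
    simp only [Finset.sum_insert hni]
    rw [myItD_add hs hx h1 h3, IH h2]

lemma myVanishMul {s : Set ℝ} (hs : IsOpen s) :
    ∀ (j : ℕ) (u g : ℝ → ℝ), ContDiffOn ℝ j u s → ContDiffOn ℝ j g s →
    ∀ x ∈ s, (∀ i, i ≤ j → iteratedDeriv i u x = 0) →
    iteratedDeriv j (fun y => u y * g y) x = 0 := by
  intro j
  induction j with
  | zero =>
    intro u g _ _ x _ h0
    have := h0 0 le_rfl
    rw [iteratedDeriv_zero] at this ⊢
    simp [this]
  | succ j IH =>
    intro u g hu hg x hx h0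
    rw [iteratedDeriv_succ']
    have hud : ∀ y ∈ s, DifferentiableAt ℝ u y := fun y hy =>
      ((hu.differentiableOn (by simp)).differentiableAt
        (hs.mem_nhds hy))
    have hgd : ∀ y ∈ s, DifferentiableAt ℝ g y := fun y hy =>
      ((hg.differentiableOn (by simp)).differentiableAt
        (hs.mem_nhds hy))
    have hueq : Set.EqOn (deriv fun y => u y * g y)
        (fun y => deriv u y * g y + u y * deriv g y) s := fun y hy =>
      deriv_mul (hud y hy) (hgd y hy)
    rw [(hueq.iteratedDeriv_of_isOpen hs j) hx]
    have hdu : ContDiffOn ℝ j (deriv u) s := hu.deriv_of_isOpen hs (by exact_mod_cast le_refl (j+1))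
    have hdg : ContDiffOn ℝ j (deriv g) s := hg.deriv_of_isOpen hs (by exact_mod_cast le_refl (j+1))
    have hu' : ContDiffOn ℝ j u s := hu.of_le (by exact_mod_cast Nat.le_succ j)
    have hg' : ContDiffOn ℝ j g s := hg.of_le (by exact_mod_cast Nat.le_succ j)
    rw [myItD_add hs hx (hdu.mul hg') (hu'.mul hdg)]
    have h1 : iteratedDeriv j (fun y => deriv u y * g y) x = 0 := by
      refine IH (deriv u) g hdu hg' x hx fun i hi => ?_
      rw [← iteratedDeriv_succ']
      exact h0 (i+1) (by omega)
    have h2 : iteratedDeriv j (fun y => u y * deriv g y) x = 0 :=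
      IH u (deriv g) hu' hdg x hx fun i hi => h0 i (by omega)
    rw [h1, h2, add_zero]

def smPartial (A : ℕ → ℝ → ℝ) (i : ℕ) : ℝ → ℝ := fun x => ∑ j ∈ Finset.range (i+1), A j x

def giQuot (A : ℕ → ℝ → ℝ) (f₀ : ℝ → ℝ) (i : ℕ) : ℝ → ℝ := fun x => smPartial A i x / f₀ x

lemma coreLemma (n : ℕ) (hn : 0 < n) (a b : ℝ) (hab : a < b)
    (f₀ f₁ : ℝ → ℝ) (S : Set ℝ) (hSopen : IsOpen S) (hSne : ∀ x ∈ S, f₀ x ≠ 0)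
    (hIccS : Icc a b ⊆ S)
    (hf₀sm : ContDiff ℝ (n : ℕ∞) f₀)
    (A : ℕ → ℝ → ℝ) (hAsm : ∀ j, ContDiff ℝ (n : ℕ∞) (A j))
    (R : ℕ → ℝ)
    (hA0 : ∀ x, ∑ j ∈ Finset.range (n+1), A j x = f₀ x)
    (hA1 : ∀ x, ∑ j ∈ Finset.range (n+1), R j * A j x = f₁ x)
    (hAvana : ∀ j ≤ n, ∀ i < j, iteratedDeriv i (A j) a = 0)
    (hAvanb : ∀ j ≤ n, ∀ i < n - j, iteratedDeriv i (A j) b = 0)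
    (hR : ∀ i < n, R i < R (i+1))
    (q : Fin n → ℝ → ℝ)
    (hspan : ∀ i : ℕ, deriv (giQuot A f₀ i) ∈ Submodule.span ℝ (Set.range q))
    (hqcd : ∀ m, ContDiffOn ℝ ((n-1 : ℕ) : ℕ∞) (q m) S)
    (hqa0 : ∀ m : Fin n, ∀ j < (m:ℕ), iteratedDeriv j (q m) a = 0)
    (hqa1 : ∀ m : Fin n, iteratedDeriv (m:ℕ) (q m) a ≠ 0)
    (hqb0 : ∀ m : Fin n, ∀ j < n - 1 - (m:ℕ), iteratedDeriv j (q m) b = 0)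
    (hqb1 : ∀ m : Fin n, iteratedDeriv (n - 1 - (m:ℕ)) (q m) b ≠ 0)
    (hqpos : ∀ m, ∀ x ∈ Ioo a b, 0 < q m x) :
    ∀ x ∈ Icc a b, 0 < deriv (fun y => f₁ y / f₀ y) x := by
  classical
  have haI : a ∈ Icc a b := left_mem_Icc.mpr hab.le
  have hbI : b ∈ Icc a b := right_mem_Icc.mpr hab.le
  have haS : a ∈ S := hIccS haI
  have hbS : b ∈ S := hIccS hbI
  have hone : (1 : ℕ∞) ≤ (n : ℕ∞) := by exact_mod_cast hn
  have hSmsm : ∀ i, ContDiff ℝ (n : ℕ∞) (smPartial A i) := by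
    intro i
    exact ContDiff.sum fun j _ => hAsm j
  have hGidiff : ∀ i, ∀ x ∈ S, DifferentiableAt ℝ (giQuot A f₀ i) x := by
    intro i x hx
    exact (((hSmsm i).differentiable (by exact_mod_cast hn.ne')).differentiableAt).div
      ((hf₀sm.differentiable (by exact_mod_cast hn.ne')).differentiableAt) (hSne x hx)
  have hqcont : ∀ m, ContinuousOn (q m) S := fun m => (hqcd m).continuousOn
  have htel : ∀ x, f₁ x = R n * f₀ x
      - ∑ i ∈ Finset.range n, (R (i+1) - R i) * smPartial A i x := by
    intro x
    have h := Finset.sum_range_by_parts R (fun j => A j x) (n+1)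
    simp only [smul_eq_mul, Nat.add_sub_cancel] at h
    rw [hA1 x, hA0 x] at h
    simpa [smPartial] using h
  -- key claim
  have hKey : ∀ i : Fin n, ∃ d : ℝ, 0 < d ∧ ∀ x, deriv (giQuot A f₀ (i:ℕ)) x = -d * q i x := by
    intro i
    set i' : ℕ := (i : ℕ) with hi'
    have hi'n : i' < n := i.isLt
    obtain ⟨c, hc⟩ := (Submodule.mem_span_range_iff_exists_fun ℝ).mp (hspan i')
    have hcpt : ∀ y, deriv (giQuot A f₀ i') y = ∑ m' : Fin n, c m' * q m' y := by
      intro y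
      rw [← hc]
      simp [Finset.sum_apply]
    have hqcdm : ∀ (j : ℕ), j ≤ n-1 → ∀ m : Fin n, ContDiffOn ℝ (j:ℕ∞) (q m) S :=
      fun j hj m => (hqcd m).of_le (by exact_mod_cast hj)
    have hinv : ContDiffOn ℝ (n:ℕ∞) (fun x => (f₀ x)⁻¹) S := hf₀sm.contDiffOn.inv hSne
    have hSmf : ∀ x, smPartial A i' x - f₀ x = -∑ j ∈ Finset.Ico (i'+1) (n+1), A j x := by
      intro x
      rw [← hA0 x, ← Finset.sum_range_add_sum_Ico (fun j => A j x) (show i'+1 ≤ n+1 by omega)]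
      simp only [smPartial]
      ring
    have hSmZa : ∀ j' ≤ i', iteratedDeriv j' (fun x => smPartial A i' x - f₀ x) a = 0 := by
      intro j' hj'
      have hfn : (fun x => smPartial A i' x - f₀ x)
          = fun x => -∑ j ∈ Finset.Ico (i'+1) (n+1), A j x := funext hSmf
      rw [hfn, iteratedDeriv_fun_neg,
        myItD_sum hSopen haS j' _ _
          (fun m hm => (hAsm m).contDiffOn.of_le (by exact_mod_cast (show j' ≤ n by omega)))]
      rw [Finset.sum_eq_zero, neg_zero]
      intro j hj
      rw [Finset.mem_Ico] at hj
      exact hAvana j (by omega) j' (by omega)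
    have hQa : ∀ j' < i', iteratedDeriv j' (deriv (giQuot A f₀ i')) a = 0 := by
      intro j' hj'
      have hEq : Set.EqOn (deriv (giQuot A f₀ i'))
          (deriv (fun x => (smPartial A i' x - f₀ x) / f₀ x)) S := by
        intro y hy
        have h1 : deriv (giQuot A f₀ i') y
            = deriv (fun x => (smPartial A i' x - f₀ x) / f₀ x + 1) y := by
          apply Filter.EventuallyEq.deriv_eq
          filter_upwards [hSopen.mem_nhds hy] with z hz
          have hf0 : f₀ z ≠ 0 := hSne z hz
          show smPartial A i' z / f₀ z = _
          rw [sub_div, div_self hf0]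
          ring
        rw [h1, deriv_add_const]
      rw [(hEq.iteratedDeriv_of_isOpen hSopen j') haS, ← iteratedDeriv_succ']
      have hdiv : (fun x => (smPartial A i' x - f₀ x) / f₀ x)
          = fun x => (smPartial A i' x - f₀ x) * (f₀ x)⁻¹ := by
        funext x; rw [div_eq_mul_inv]
      rw [hdiv]
      refine myVanishMul hSopen (j'+1) _ _
        (((hSmsm i').sub hf₀sm).contDiffOn.of_le (by exact_mod_cast (show j'+1 ≤ n by omega)))
        (hinv.of_le (by exact_mod_cast (show j'+1 ≤ n by omega))) a haS ?_
      intro i0 hi0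
      exact hSmZa i0 (by omega)
    have hQb : ∀ j' < n-1-i', iteratedDeriv j' (deriv (giQuot A f₀ i')) b = 0 := by
      intro j' hj'
      rw [← iteratedDeriv_succ']
      have hdiv : giQuot A f₀ i' = fun x => smPartial A i' x * (f₀ x)⁻¹ := by
        funext x; exact div_eq_mul_inv _ _
      rw [hdiv]
      refine myVanishMul hSopen (j'+1) _ _
        ((hSmsm i').contDiffOn.of_le (by exact_mod_cast (show j'+1 ≤ n by omega)))
        (hinv.of_le (by exact_mod_cast (show j'+1 ≤ n by omega))) b hbS ?_
      intro i0 hi0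
      show iteratedDeriv i0 (smPartial A i') b = 0
      have hsm : smPartial A i' = fun x => ∑ j ∈ Finset.range (i'+1), A j x := rfl
      rw [hsm, myItD_sum hSopen hbS i0 _ _
        (fun m hm => (hAsm m).contDiffOn.of_le (by exact_mod_cast (show i0 ≤ n by omega)))]
      apply Finset.sum_eq_zero
      intro j hj
      rw [Finset.mem_range] at hj
      exact hAvanb j (by omega) i0 (by omega)
    have hsumval : ∀ (M : ℕ), M ≤ n-1 → ∀ (y : ℝ), y ∈ S →
        iteratedDeriv M (deriv (giQuot A f₀ i')) y
          = ∑ m' : Fin n, c m' * iteratedDeriv M (q m') y := by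
      intro M hM y hy
      have hfeq : deriv (giQuot A f₀ i') = fun z => ∑ m' : Fin n, c m' * q m' z := funext hcpt
      rw [hfeq, myItD_sum hSopen hy M Finset.univ (fun m' => fun z => c m' * q m' z)
        (fun m' _ => ContDiffOn.mul contDiffOn_const (hqcdm M hM m'))]
      exact Finset.sum_congr rfl fun m' _ => myItD_const_mul hSopen hy (c m') (hqcdm M hM m')
    have hczA : ∀ M : ℕ, ∀ m : Fin n, (m:ℕ) = M → (m:ℕ) < i' → c m = 0 := by
      intro M
      induction M using Nat.strong_induction_on with
      | _ M IH =>
        intro m hmM hmi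
        have h0 : iteratedDeriv M (deriv (giQuot A f₀ i')) a = 0 := hQa M (by omega)
        rw [hsumval M (by omega) a haS] at h0
        have hsingle : ∑ m' : Fin n, c m' * iteratedDeriv M (q m') a
            = c m * iteratedDeriv M (q m) a := by
          apply Finset.sum_eq_single_of_mem m (Finset.mem_univ m)
          intro m' _ hne
          rcases lt_trichotomy ((m':ℕ)) M with h | h | h
          · rw [IH (m':ℕ) h m' rfl (by omega), zero_mul]
          · exact absurd (Fin.ext (show (m':ℕ) = (m:ℕ) by omega)) hne
          · rw [hqa0 m' M h, mul_zero]
        rw [hsingle] at h0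
        rcases mul_eq_zero.mp h0 with h | h
        · exact h
        · rw [← hmM] at h
          exact absurd h (hqa1 m)
    have hczB : ∀ M : ℕ, ∀ m : Fin n, n-1-(m:ℕ) = M → i' < (m:ℕ) → c m = 0 := by
      intro M
      induction M using Nat.strong_induction_on with
      | _ M IH =>
        intro m hmM hmi
        have hmn : (m:ℕ) < n := m.isLt
        have h0 : iteratedDeriv M (deriv (giQuot A f₀ i')) b = 0 := hQb M (by omega)
        rw [hsumval M (by omega) b hbS] at h0
        have hsingle : ∑ m' : Fin n, c m' * iteratedDeriv M (q m') b
            = c m * iteratedDeriv M (q m) b := by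
          apply Finset.sum_eq_single_of_mem m (Finset.mem_univ m)
          intro m' _ hne
          have hm'n : (m':ℕ) < n := m'.isLt
          rcases lt_trichotomy ((m':ℕ)) ((m:ℕ)) with h | h | h
          · rw [hqb0 m' M (by omega), mul_zero]
          · exact absurd (Fin.ext h) hne
          · rw [IH (n-1-(m':ℕ)) (by omega) m' rfl (by omega), zero_mul]
        rw [hsingle] at h0
        rcases mul_eq_zero.mp h0 with h | h
        · exact h
        · rw [← hmM] at h
          exact absurd h (hqb1 m)
    have hfun : ∀ y, deriv (giQuot A f₀ i') y = c i * q i y := by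
      intro y
      rw [hcpt y]
      apply Finset.sum_eq_single_of_mem i (Finset.mem_univ i)
      intro m' _ hne
      rcases lt_trichotomy ((m':ℕ)) i' with h | h | h
      · rw [hczA (m':ℕ) m' rfl h, zero_mul]
      · exact absurd (Fin.ext (show (m':ℕ) = (i:ℕ) from h)) hne
      · rw [hczB (n-1-(m':ℕ)) m' rfl h, zero_mul]
    have hqIcc : ContinuousOn (q i) (Icc a b) := (hqcont i).mono hIccS
    have hqint : IntervalIntegrable (q i) MeasureTheory.volume a b := by
      apply ContinuousOn.intervalIntegrable
      rwa [uIcc_of_le hab.le]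
    have hFTC : ∫ y in a..b, c i * q i y = giQuot A f₀ i' b - giQuot A f₀ i' a := by
      apply intervalIntegral.integral_eq_sub_of_hasDerivAt
      · intro y hy
        rw [uIcc_of_le hab.le] at hy
        have hdy := (hGidiff i' y (hIccS hy)).hasDerivAt
        rwa [hfun y] at hdy
      · exact hqint.const_mul _
    have hGb : giQuot A f₀ i' b = 0 := by
      have hSb : smPartial A i' b = 0 := by
        apply Finset.sum_eq_zero
        intro j hj
        rw [Finset.mem_range] at hj
        have hz := hAvanb j (by omega) 0 (by omega)
        rwa [iteratedDeriv_zero] at hz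
      show smPartial A i' b / f₀ b = 0
      rw [hSb, zero_div]
    have hGa : giQuot A f₀ i' a = 1 := by
      have hterm : ∀ j, 1 ≤ j → j ≤ n → A j a = 0 := by
        intro j h1 h2
        have hz := hAvana j h2 0 (by omega)
        rwa [iteratedDeriv_zero] at hz
      have hSa : smPartial A i' a = A 0 a := by
        apply Finset.sum_eq_single_of_mem 0 (Finset.mem_range.mpr (by omega))
        intro j hj hjne
        rw [Finset.mem_range] at hj
        exact hterm j (by omega) (by omega)
      have hfa : f₀ a = A 0 a := by
        rw [← hA0 a]
        apply Finset.sum_eq_single_of_mem 0 (Finset.mem_range.mpr (by omega))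
        intro j hj hjne
        rw [Finset.mem_range] at hj
        exact hterm j (by omega) (by omega)
      show smPartial A i' a / f₀ a = 1
      rw [hSa, show A 0 a = f₀ a from hfa.symm]
      exact div_self (hSne a haS)
    have hIpos : 0 < ∫ y in a..b, q i y :=
      intervalIntegral.intervalIntegral_pos_of_pos_on hqint (fun y hy => hqpos i y hy) hab
    have hci : c i * ∫ y in a..b, q i y = -1 := by
      rw [← intervalIntegral.integral_const_mul, hFTC, hGb, hGa]
      ring
    have hcineg : c i < 0 := by nlinarith
    refine ⟨-c i, by linarith, fun y => ?_⟩
    rw [hfun y]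
    ring
  choose D hD hDeq using hKey
  -- nonnegativity of q on Icc
  have hqnnA : ∀ m : Fin n, 0 ≤ q m a := by
    intro m
    have hne : (𝓝[Ioo a b] a).NeBot := by
      rw [← mem_closure_iff_nhdsWithin_neBot, closure_Ioo hab.ne]
      exact haI
    have hca : ContinuousAt (q m) a := (hqcont m).continuousAt (hSopen.mem_nhds haS)
    exact ge_of_tendsto (hca.continuousWithinAt.tendsto)
      (eventually_nhdsWithin_of_forall fun y hy => (hqpos m y hy).le)
  have hqnnB : ∀ m : Fin n, 0 ≤ q m b := by
    intro m
    have hne : (𝓝[Ioo a b] b).NeBot := by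
      rw [← mem_closure_iff_nhdsWithin_neBot, closure_Ioo hab.ne]
      exact hbI
    have hcb : ContinuousAt (q m) b := (hqcont m).continuousAt (hSopen.mem_nhds hbS)
    exact ge_of_tendsto (hcb.continuousWithinAt.tendsto)
      (eventually_nhdsWithin_of_forall fun y hy => (hqpos m y hy).le)
  have hqnn : ∀ m : Fin n, ∀ x ∈ Icc a b, 0 ≤ q m x := by
    intro m x hx
    rcases eq_or_lt_of_le hx.1 with hxa | hax
    · rw [← hxa]; exact hqnnA m
    · rcases eq_or_lt_of_le hx.2 with hxb | hxb
      · rw [hxb]; exact hqnnB m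
      · exact (hqpos m x ⟨hax, hxb⟩).le
  have hq0a : 0 < q ⟨0, hn⟩ a := by
    rcases (hqnnA ⟨0, hn⟩).lt_or_eq with h | h
    · exact h
    · exfalso
      apply hqa1 ⟨0, hn⟩
      rw [iteratedDeriv_zero]
      exact h.symm
  have hqlb : 0 < q ⟨n-1, by omega⟩ b := by
    rcases (hqnnB ⟨n-1, by omega⟩).lt_or_eq with h | h
    · exact h
    · exfalso
      apply hqb1 ⟨n-1, by omega⟩
      have hz : n - 1 - ((⟨n-1, by omega⟩ : Fin n) : ℕ) = 0 := by simp
      rw [hz, iteratedDeriv_zero]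
      exact h.symm
  -- conclusion
  intro x hx
  have hxS := hIccS hx
  have heq : deriv (fun y => f₁ y / f₀ y) x
      = ∑ i : Fin n, (R ((i:ℕ)+1) - R (i:ℕ)) * (D i * q i x) := by
    have hEqOn : Set.EqOn (fun y => f₁ y / f₀ y)
        (fun y => R n - ∑ i ∈ Finset.range n, (R (i+1) - R i) * giQuot A f₀ i y) S := by
      intro y hy
      have hf0 : f₀ y ≠ 0 := hSne y hy
      simp only
      rw [htel y, sub_div, mul_div_assoc, div_self hf0, mul_one, Finset.sum_div]
      congr 1
      exact Finset.sum_congr rfl fun i _ => (mul_div_assoc _ _ _)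
    have hd1 : deriv (fun y => f₁ y / f₀ y) x
        = deriv (fun y => R ↑n - ∑ i ∈ Finset.range n, (R (i+1) - R i) * giQuot A f₀ i y) x := by
      apply Filter.EventuallyEq.deriv_eq
      filter_upwards [hSopen.mem_nhds hxS] with z hz
      exact hEqOn hz
    rw [hd1, deriv_const_sub, deriv_fun_sum (fun i _ => (hGidiff i x hxS).const_mul _)]
    rw [← Fin.sum_univ_eq_sum_range
      (fun i => deriv (fun y => (R (i+1) - R i) * giQuot A f₀ i y) x) n]
    have hterm : ∀ i : Fin n, deriv (fun y => (R ((i:ℕ)+1) - R (i:ℕ)) * giQuot A f₀ (i:ℕ) y) x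
        = -((R ((i:ℕ)+1) - R (i:ℕ)) * (D i * q i x)) := by
      intro i
      rw [deriv_const_mul _ (hGidiff (i:ℕ) x hxS), hDeq i x]
      ring
    rw [Finset.sum_congr rfl (fun i _ => hterm i)]
    simp
  rw [heq]
  apply Finset.sum_pos'
  · intro i _
    have h1 : 0 ≤ R ((i:ℕ)+1) - R (i:ℕ) := by linarith [hR (i:ℕ) i.isLt]
    have h2 : 0 ≤ q i x := hqnn i x hx
    exact mul_nonneg h1 (mul_nonneg (hD i).le h2)
  · rcases eq_or_lt_of_le hx.1 with hxa | hax
    · refine ⟨⟨0, hn⟩, Finset.mem_univ _, ?_⟩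
      have h1 : 0 < R (0+1) - R 0 := by linarith [hR 0 hn]
      have h2 : 0 < q ⟨0, hn⟩ x := by rw [← hxa]; exact hq0a
      have h3 := hD ⟨0, hn⟩
      simp only [Fin.val_mk]
      exact mul_pos h1 (mul_pos h3 h2)
    · rcases eq_or_lt_of_le hx.2 with hxb | hxb
      · refine ⟨⟨n-1, by omega⟩, Finset.mem_univ _, ?_⟩
        have h1 : 0 < R ((n-1)+1) - R (n-1) := by linarith [hR (n-1) (by omega)]
        have h2 : 0 < q ⟨n-1, by omega⟩ x := by rw [hxb]; exact hqlb
        have h3 := hD ⟨n-1, by omega⟩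
        simp only [Fin.val_mk]
        exact mul_pos h1 (mul_pos h3 h2)
      · refine ⟨⟨0, hn⟩, Finset.mem_univ _, ?_⟩
        have h1 : 0 < R (0+1) - R 0 := by linarith [hR 0 hn]
        have h2 : 0 < q ⟨0, hn⟩ x := hqpos _ x ⟨hax, hxb⟩
        have h3 := hD ⟨0, hn⟩
        simp only [Fin.val_mk]
        exact mul_pos h1 (mul_pos h3 h2)


/-- `p k`, `k = 0, …, n`, is a Bernstein basis of the `(n+1)`-dimensional subspace `U` of
`C^n([a,b], ℝ)`: it is a basis of `U` and each `p k` has a zero of order `k` at `a`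
(derivatives of order `< k` vanish at `a`, the `k`-th does not) and a zero of order
`n - k` at `b`. -/
def IsBernsteinBasisOf (a b : ℝ) (n : ℕ) (U : Submodule ℝ (ℝ → ℝ))
    (p : Fin (n + 1) → ℝ → ℝ) : Prop :=
  (∀ k, p k ∈ U) ∧ LinearIndependent ℝ p ∧ Submodule.span ℝ (Set.range p) = U ∧
  ∀ k : Fin (n + 1),
    (∀ j : ℕ, j < (k : ℕ) → iteratedDeriv j (p k) a = 0) ∧
    iteratedDeriv (k : ℕ) (p k) a ≠ 0 ∧
    (∀ j : ℕ, j < n - (k : ℕ) → iteratedDeriv j (p k) b = 0) ∧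
    iteratedDeriv (n - (k : ℕ)) (p k) b ≠ 0

/-- `q k`, `k = 0, …, n-1`, is a Bernstein basis of the `n`-dimensional space
`D_{f₀}U = { (f/f₀)' : f ∈ U }`: every `q k` lies in `D_{f₀}U`, every element of `D_{f₀}U`
lies in the span of the `q k`, the family is linearly independent, and each `q k` has a zero
of order `k` at `a` and a zero of order `n - 1 - k` at `b`. -/
def IsBernsteinBasisOfD (a b : ℝ) (n : ℕ) (f₀ : ℝ → ℝ) (U : Submodule ℝ (ℝ → ℝ))
    (q : Fin n → ℝ → ℝ) : Prop :=
  (∀ k, ∃ f ∈ U, q k = deriv (fun x => f x / f₀ x)) ∧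
  (∀ f ∈ U, deriv (fun x => f x / f₀ x) ∈ Submodule.span ℝ (Set.range q)) ∧
  LinearIndependent ℝ q ∧
  ∀ k : Fin n,
    (∀ j : ℕ, j < (k : ℕ) → iteratedDeriv j (q k) a = 0) ∧
    iteratedDeriv (k : ℕ) (q k) a ≠ 0 ∧
    (∀ j : ℕ, j < n - 1 - (k : ℕ) → iteratedDeriv j (q k) b = 0) ∧
    iteratedDeriv (n - 1 - (k : ℕ)) (q k) b ≠ 0

/-- Corollary: if a generalized Bernstein operator with strictly increasing nodes fixing `f₀`
and `f₁` exists, then `(f₁/f₀)' > 0` on the closed interval `[a,b]`. -/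
theorem deriv_ratio_pos_of_strictMono_nodes
    (n : ℕ) (a b : ℝ) (hab : a < b)
    (U : Submodule ℝ (ℝ → ℝ))
    (hUdim : Module.finrank ℝ ↥U = n + 1)
    (hUsmooth : ∀ f ∈ U, ContDiff ℝ (n : ℕ∞) f)
    (p : Fin (n + 1) → ℝ → ℝ)
    (hp : IsBernsteinBasisOf a b n U p)
    (hpnn : ∀ k, ∀ x ∈ Set.Icc a b, 0 ≤ p k x)
    (f₀ f₁ : ℝ → ℝ) (hf₀U : f₀ ∈ U) (hf₁U : f₁ ∈ U)
    (hf₀pos : ∀ x ∈ Set.Icc a b, 0 < f₀ x)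
    (q : Fin n → ℝ → ℝ)
    (hq : IsBernsteinBasisOfD a b n f₀ U q)
    (hqpos : ∀ k, ∀ x ∈ Set.Ioo a b, 0 < q k x)
    (hmono : StrictMonoOn (fun x => f₁ x / f₀ x) (Set.Icc a b))
    (t : Fin (n + 1) → ℝ) (α : Fin (n + 1) → ℝ)
    (ht : StrictMono t) (htmem : ∀ k, t k ∈ Set.Icc a b) (hα : ∀ k, 0 < α k)
    (hB₀ : ∀ x, ∑ k, f₀ (t k) * α k * p k x = f₀ x)
    (hB₁ : ∀ x, ∑ k, f₁ (t k) * α k * p k x = f₁ x) :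
    ∀ x ∈ Set.Icc a b, 0 < deriv (fun y => f₁ y / f₀ y) x := by
  classical
  rcases Nat.eq_zero_or_pos n with hn0 | hn
  · -- degenerate case n = 0 : contradiction with strict monotonicity
    exfalso
    subst hn0
    have hf0a : f₀ a ≠ 0 := (hf₀pos a ⟨le_refl a, hab.le⟩).ne'
    have hv : (⟨f₀, hf₀U⟩ : U) ≠ 0 := by
      intro h
      apply hf0a
      have h2 := congrArg (fun g : U => (g : ℝ → ℝ) a) h
      simpa using h2
    have hone : Module.finrank ℝ ↥U = 1 := hUdim
    obtain ⟨c, hc⟩ := (finrank_eq_one_iff_of_nonzero' (⟨f₀, hf₀U⟩ : U) hv).mp hone ⟨f₁, hf₁U⟩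
    have hpt : ∀ y, f₁ y = c * f₀ y := by
      intro y
      have h2 := congrArg (fun g : U => (g : ℝ → ℝ) y) hc
      simpa using h2.symm
    have h1 : f₁ a / f₀ a = c := by
      rw [hpt a]
      field_simp
    have h2 : f₁ b / f₀ b = c := by
      have hf0b : f₀ b ≠ 0 := (hf₀pos b ⟨hab.le, le_refl b⟩).ne'
      rw [hpt b]
      field_simp
    have h3 := hmono ⟨le_refl a, hab.le⟩ ⟨hab.le, le_refl b⟩ hab
    simp only at h3
    rw [h1, h2] at h3
    exact lt_irrefl c h3
  · have hf₀sm : ContDiff ℝ (n : ℕ∞) f₀ := hUsmooth f₀ hf₀U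
    set S : Set ℝ := f₀ ⁻¹' ({0}ᶜ) with hS_def
    have hSopen : IsOpen S := isOpen_compl_singleton.preimage hf₀sm.continuous
    have hSne : ∀ x ∈ S, f₀ x ≠ 0 := fun x hx => hx
    have hIccS : Icc a b ⊆ S := fun x hx => (hf₀pos x hx).ne'
    set e : ℕ → Fin (n+1) := fun j => ⟨min j n, by omega⟩ with he_def
    have he : ∀ k : Fin (n+1), e (k:ℕ) = k := by
      intro k
      have hk : min (k:ℕ) n = (k:ℕ) := Nat.min_eq_left (Nat.lt_succ_iff.mp k.isLt)
      simp [he_def, Fin.ext_iff, hk]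
    have hej : ∀ j ≤ n, ((e j : Fin (n+1)) : ℕ) = j := by
      intro j hj
      simp [he_def, Nat.min_eq_left hj]
    set A : ℕ → ℝ → ℝ := fun j x => f₀ (t (e j)) * α (e j) * p (e j) x with hA_def
    set R : ℕ → ℝ := fun j => f₁ (t (e j)) / f₀ (t (e j)) with hR_def
    have hf₀t : ∀ k : Fin (n+1), f₀ (t k) ≠ 0 := fun k => (hf₀pos _ (htmem k)).ne'
    have hA0 : ∀ x, ∑ j ∈ Finset.range (n+1), A j x = f₀ x := by
      intro x
      rw [← Fin.sum_univ_eq_sum_range (fun j => A j x) (n+1), ← hB₀ x]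
      exact Finset.sum_congr rfl fun k _ => by rw [hA_def]; simp only; rw [he k]
    have hA1 : ∀ x, ∑ j ∈ Finset.range (n+1), R j * A j x = f₁ x := by
      intro x
      rw [← Fin.sum_univ_eq_sum_range (fun j => R j * A j x) (n+1), ← hB₁ x]
      refine Finset.sum_congr rfl fun k _ => ?_
      rw [hA_def, hR_def]
      simp only
      rw [he k]
      field_simp [hf₀t k]
    have hAsm : ∀ j, ContDiff ℝ (n:ℕ∞) (A j) := by
      intro j
      rw [hA_def]
      exact contDiff_const.mul (hUsmooth _ (hp.1 (e j)))
    have hAvana : ∀ j ≤ n, ∀ i < j, iteratedDeriv i (A j) a = 0 := by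
      intro j hj i hij
      have hz : iteratedDeriv i (p (e j)) a = 0 := by
        apply (hp.2.2.2 (e j)).1
        rw [hej j hj]
        exact hij
      have hsm : ContDiffOn ℝ (i:ℕ∞) (p (e j)) univ :=
        (hUsmooth _ (hp.1 (e j))).contDiffOn.of_le (by exact_mod_cast (show i ≤ n by omega))
      rw [hA_def]
      simp only
      rw [myItD_const_mul isOpen_univ (mem_univ a) _ hsm, hz, mul_zero]
    have hAvanb : ∀ j ≤ n, ∀ i < n - j, iteratedDeriv i (A j) b = 0 := by
      intro j hj i hij
      have hz : iteratedDeriv i (p (e j)) b = 0 := by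
        apply (hp.2.2.2 (e j)).2.2.1
        rw [hej j hj]
        exact hij
      have hsm : ContDiffOn ℝ (i:ℕ∞) (p (e j)) univ :=
        (hUsmooth _ (hp.1 (e j))).contDiffOn.of_le (by exact_mod_cast (show i ≤ n by omega))
      rw [hA_def]
      simp only
      rw [myItD_const_mul isOpen_univ (mem_univ b) _ hsm, hz, mul_zero]
    have hR' : ∀ i < n, R i < R (i+1) := by
      intro i hi
      have hlt : t (e i) < t (e (i+1)) := by
        apply ht
        rw [Fin.lt_def, hej i (by omega), hej (i+1) (by omega)]
        omega
      have h3 := hmono (htmem (e i)) (htmem (e (i+1))) hlt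
      simpa [hR_def] using h3
    have hqcd : ∀ m : Fin n, ContDiffOn ℝ ((n-1:ℕ):ℕ∞) (q m) S := by
      intro m
      obtain ⟨g, hgU, hqm⟩ := hq.1 m
      rw [hqm]
      have hgsm : ContDiffOn ℝ (n:ℕ∞) (fun x => g x / f₀ x) S :=
        (hUsmooth g hgU).contDiffOn.div hf₀sm.contDiffOn hSne
      exact hgsm.deriv_of_isOpen hSopen (by exact_mod_cast (show (n-1)+1 ≤ n by omega))
    have hSmU : ∀ i : ℕ, smPartial A i ∈ U := by
      intro i
      have hfn : smPartial A i
          = ∑ j ∈ Finset.range (i+1), (f₀ (t (e j)) * α (e j)) • p (e j) := by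
        funext x
        simp [smPartial, hA_def, Finset.sum_apply, smul_eq_mul, mul_assoc]
      rw [hfn]
      exact Submodule.sum_mem U fun j _ => Submodule.smul_mem U _ (hp.1 (e j))
    have hspan : ∀ i : ℕ, deriv (giQuot A f₀ i) ∈ Submodule.span ℝ (Set.range q) :=
      fun i => hq.2.1 _ (hSmU i)
    exact coreLemma n hn a b hab f₀ f₁ S hSopen hSne hIccS hf₀sm A hAsm R hA0 hA1
      hAvana hAvanb hR' q hspan hqcd
      (fun m => (hq.2.2.2 m).1) (fun m => (hq.2.2.2 m).2.1)
      (fun m => (hq.2.2.2 m).2.2.1) (fun m => (hq.2.2.2 m).2.2.2) hqpos
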